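/- There exist a constant C > 0 and an integer N₀ such that for every integer N ≥ N₀ and all real numbers α, β, γ with 0 ≤ α ≤ 1/2, 1/2 ≤ β ≤ 20, and 1/2 ≤ γ ≤ 3/2, one has −∂L_N/∂α (α, β, γ) ≥ 1/(8N²) − C/N³ and −∂L_N/∂β (α, β, γ) ≤ 3·√e/(4N²) + C/N³, where e is Euler's number. -/

import Mathlib

noncomputable section

/-- `s = exp(β·e^α / (e^α + 2N − 2))`. -/
def sFun (N : ℕ) (α β : ℝ) : ℝ :=
  Real.exp (β * Real.exp α / (Real.exp α + 2 * (N : ℝ) - 2))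

/-- `r = s + 2N − 1`. -/
def rFun (N : ℕ) (α β : ℝ) : ℝ := sFun N α β + 2 * (N : ℝ) - 1

/-- The loss `L_N(α, β, γ) = γ²·(s² + 2N − 1)/r² − 2γ·s/r + 1`. -/
def Lfun (N : ℕ) (α β γ : ℝ) : ℝ :=
  γ ^ 2 * ((sFun N α β) ^ 2 + (2 * (N : ℝ) - 1)) / (rFun N α β) ^ 2 -
    2 * γ * sFun N α β / rFun N α β + 1

/-- The partial derivative `∂L_N/∂α`. -/
def dLalpha (N : ℕ) (α β γ : ℝ) : ℝ := deriv (fun x => Lfun N x β γ) α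

/-- The partial derivative `∂L_N/∂β`. -/
def dLbeta (N : ℕ) (α β γ : ℝ) : ℝ := deriv (fun x => Lfun N α x γ) β

/-- The partial derivative `∂L_N/∂γ`. -/
def dLgamma (N : ℕ) (α β γ : ℝ) : ℝ := deriv (fun x => Lfun N α β x) γ

set_option maxHeartbeats 1000000

lemma hasDerivAt_outer (γ M s : ℝ) (hr : s + M ≠ 0) :
    HasDerivAt (fun u : ℝ => γ^2 * (u^2 + M) / (u+M)^2 - 2*γ*u/(u+M) + 1)
      (2*γ*M*(γ*(s-1) - (s+M)) / (s+M)^3) s := by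
  have h1 : HasDerivAt (fun u : ℝ => u + M) 1 s := (hasDerivAt_id s).add_const M
  have h2 := h1.pow 2
  have h3 : HasDerivAt (fun u : ℝ => γ^2*(u^2+M)) (γ^2*(2*s)) s := by
    have := ((hasDerivAt_pow 2 s).add_const M).const_mul (γ^2)
    simpa using this
  have h4 := h3.div h2 (pow_ne_zero 2 hr)
  have h5 : HasDerivAt (fun u : ℝ => 2*γ*u) (2*γ) s := by
    simpa using (hasDerivAt_id s).const_mul (2*γ)
  have h6 := h5.div h1 hr
  have h7 := (h4.sub h6).add_const 1
  refine h7.congr_deriv ?_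
  simp only [Pi.pow_apply]
  field_simp
  ring

lemma hasDerivAt_s_alpha (N : ℕ) (α β : ℝ) (hG : Real.exp α + 2*(N:ℝ) - 2 ≠ 0) :
    HasDerivAt (fun x => sFun N x β)
      (sFun N α β * (β * Real.exp α * (2*(N:ℝ) - 2) / (Real.exp α + 2*(N:ℝ) - 2)^2)) α := by
  have he : HasDerivAt (fun x : ℝ => Real.exp x) (Real.exp α) α := Real.hasDerivAt_exp α
  have hnum : HasDerivAt (fun x : ℝ => β * Real.exp x) (β * Real.exp α) α := he.const_mul β
  have hg : HasDerivAt (fun x : ℝ => Real.exp x + 2*(N:ℝ) - 2) (Real.exp α) α :=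
    (he.add_const (2*(N:ℝ))).sub_const 2
  have ht := hnum.div hg hG
  have hs := ht.exp
  have hfun : (fun x => sFun N x β) =
      fun x => Real.exp (β * Real.exp x / (Real.exp x + 2*(N:ℝ) - 2)) := by
    funext x; simp [sFun]
  rw [hfun]
  refine hs.congr_deriv ?_
  simp only [sFun, Pi.div_apply]
  ring

lemma hasDerivAt_s_beta (N : ℕ) (α β : ℝ) :
    HasDerivAt (fun x => sFun N α x)
      (sFun N α β * (Real.exp α / (Real.exp α + 2*(N:ℝ) - 2))) β := by
  have ht : HasDerivAt (fun x : ℝ => x * Real.exp α / (Real.exp α + 2*(N:ℝ) - 2))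
      (Real.exp α / (Real.exp α + 2*(N:ℝ) - 2)) β := by
    simpa using ((hasDerivAt_id β).mul_const (Real.exp α)).div_const (Real.exp α + 2*(N:ℝ) - 2)
  have hs := ht.exp
  have hfun : (fun x => sFun N α x) =
      fun x => Real.exp (x * Real.exp α / (Real.exp α + 2*(N:ℝ) - 2)) := by
    funext x; simp [sFun]
  rw [hfun]
  exact hs

lemma dLalpha_eq (N : ℕ) (α β γ : ℝ) (hG : Real.exp α + 2*(N:ℝ) - 2 ≠ 0)
    (hr : sFun N α β + (2*(N:ℝ) - 1) ≠ 0) :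
    dLalpha N α β γ =
      (2*γ*(2*(N:ℝ)-1)*(γ*(sFun N α β - 1) - (sFun N α β + (2*(N:ℝ)-1))) / (sFun N α β + (2*(N:ℝ)-1))^3)
        * (sFun N α β * (β * Real.exp α * (2*(N:ℝ) - 2) / (Real.exp α + 2*(N:ℝ) - 2)^2)) := by
  have h := (hasDerivAt_outer γ (2*(N:ℝ)-1) (sFun N α β) hr).comp α (hasDerivAt_s_alpha N α β hG)
  have hfun : (fun x => Lfun N x β γ) =
      (fun u : ℝ => γ^2 * (u^2 + (2*(N:ℝ)-1)) / (u+(2*(N:ℝ)-1))^2 - 2*γ*u/(u+(2*(N:ℝ)-1)) + 1)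
        ∘ (fun x => sFun N x β) := by
    funext x; simp only [Lfun, rFun, Function.comp]; ring
  rw [dLalpha, hfun]
  exact h.deriv

lemma dLbeta_eq (N : ℕ) (α β γ : ℝ)
    (hr : sFun N α β + (2*(N:ℝ) - 1) ≠ 0) :
    dLbeta N α β γ =
      (2*γ*(2*(N:ℝ)-1)*(γ*(sFun N α β - 1) - (sFun N α β + (2*(N:ℝ)-1))) / (sFun N α β + (2*(N:ℝ)-1))^3)
        * (sFun N α β * (Real.exp α / (Real.exp α + 2*(N:ℝ) - 2))) := by
  have h := (hasDerivAt_outer γ (2*(N:ℝ)-1) (sFun N α β) hr).comp β (hasDerivAt_s_beta N α β)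
  have hfun : (fun x => Lfun N α x γ) =
      (fun u : ℝ => γ^2 * (u^2 + (2*(N:ℝ)-1)) / (u+(2*(N:ℝ)-1))^2 - 2*γ*u/(u+(2*(N:ℝ)-1)) + 1)
        ∘ (fun x => sFun N α x) := by
    funext x; simp only [Lfun, rFun, Function.comp]; ring
  rw [dLbeta, hfun]
  exact h.deriv

lemma bound_alpha (n γ X s β a : ℝ) (hn : 1000 ≤ n) (hγ : 1/2 ≤ γ)
    (hX : 2*n - 1 ≤ X) (hs : 1 ≤ s) (hβ : 1/2 ≤ β) (ha : 1 ≤ a)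
    (hrup : s + (2*n - 1) ≤ 2*n + 1) (haup : a + 2*n - 2 ≤ 2*n) :
    1/(8*n^2) - 1000/n^3 ≤
      (2*γ*(2*n-1)*X*s*β*a*(2*n-2)) / ((s + (2*n-1))^3 * (a + 2*n-2)^2) := by
  have hX0 : (0:ℝ) ≤ X := by linarith
  have h2n : (0:ℝ) < 2*n - 1 := by linarith
  have hfac1 : (2*n-1)*(2*n-1) ≤ (2*γ*(2*n-1))*X :=
    mul_le_mul (by nlinarith) hX (by linarith) (by nlinarith)
  have hfac2 : (1:ℝ) ≤ s*a := by nlinarith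
  have hfac3 : (n-1) ≤ β*(2*n-2) := by nlinarith
  have h12 : ((2*n-1)*(2*n-1))*1 ≤ ((2*γ*(2*n-1))*X)*(s*a) :=
    mul_le_mul hfac1 hfac2 zero_le_one (by nlinarith)
  have h123 : (((2*n-1)*(2*n-1))*1)*(n-1) ≤ (((2*γ*(2*n-1))*X)*(s*a))*(β*(2*n-2)) :=
    mul_le_mul h12 hfac3 (by linarith) (by nlinarith)
  have hNum : (2*n-1)*(2*n-1)*(n-1) ≤ 2*γ*(2*n-1)*X*s*β*a*(2*n-2) := by nlinarith [h123]
  have hrlo : (0:ℝ) < s + (2*n-1) := by linarith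
  have halo : (0:ℝ) < a + 2*n - 2 := by linarith
  have hDen : (s + (2*n-1))^3 * (a + 2*n-2)^2 ≤ (2*n+1)^3 * (2*n)^2 :=
    mul_le_mul (pow_le_pow_left₀ hrlo.le hrup 3) (pow_le_pow_left₀ halo.le haup 2)
      (by positivity) (by positivity)
  have hDen0 : (0:ℝ) < (s + (2*n-1))^3 * (a + 2*n-2)^2 := by positivity
  have hstep : ((2*n-1)*(2*n-1)*(n-1)) / ((2*n+1)^3 * (2*n)^2) ≤
      (2*γ*(2*n-1)*X*s*β*a*(2*n-2)) / ((s + (2*n-1))^3 * (a + 2*n-2)^2) :=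
    div_le_div₀ (by nlinarith) hNum hDen0 hDen
  refine le_trans ?_ hstep
  have heq : 1/(8*n^2) - 1000/n^3 = (n - 8000)/(8*n^3) := by
    field_simp; ring
  rw [heq, div_le_div_iff₀ (by positivity) (by positivity)]
  nlinarith [sq_nonneg n, hn]

lemma bound_beta (n γ X s a E : ℝ) (hn : 1000 ≤ n) (hγ : γ ≤ 3/2) (hγ0 : 0 ≤ γ)
    (hX0 : 0 ≤ X) (hXup : X ≤ 2*n + 1) (hs : 1 ≤ s) (hMs : (2*n-1)*s ≤ 2*n + 79)
    (ha : 1 ≤ a) (haE : a ≤ E) (hE1 : 1 ≤ E) (hE2 : E ≤ 2)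
    (hrup : s + (2*n-1) ≤ 2*n + 1) (haG : 2*n - 1 ≤ a + 2*n - 2) :
    (2*γ*(2*n-1)*X*s*a) / ((s + (2*n-1))^3 * (a + 2*n-2)) ≤
      3*E/(4*n^2) + 1000/n^3 := by
  have h2n : (0:ℝ) < 2*n - 1 := by linarith
  have hrlo : 2*n ≤ s + (2*n-1) := by linarith
  have halo : (0:ℝ) < a + 2*n - 2 := by linarith
  have hDenLo : (2*n)^3 * (2*n-1) ≤ (s + (2*n-1))^3 * (a + 2*n-2) :=
    mul_le_mul (pow_le_pow_left₀ (by linarith) hrlo 3) haG h2n.le (by positivity)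
  have hfac1 : (2*γ)*((2*n-1)*s) ≤ 3*(2*n+79) :=
    mul_le_mul (by linarith) hMs (by nlinarith) (by norm_num)
  have hfac2 : X*a ≤ (2*n+1)*E := mul_le_mul hXup haE (by linarith) (by linarith)
  have h12 : ((2*γ)*((2*n-1)*s))*(X*a) ≤ (3*(2*n+79))*((2*n+1)*E) :=
    mul_le_mul hfac1 hfac2 (by nlinarith [mul_nonneg hX0 (by linarith : (0:ℝ) ≤ a)])
      (by nlinarith)
  have hNum : 2*γ*(2*n-1)*X*s*a ≤ 3*(2*n+79)*((2*n+1)*E) := by nlinarith [h12]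
  have hDen0 : (0:ℝ) < (2*n)^3 * (2*n-1) := by positivity
  have hstep : (2*γ*(2*n-1)*X*s*a) / ((s + (2*n-1))^3 * (a + 2*n-2)) ≤
      (3*(2*n+79)*((2*n+1)*E)) / ((2*n)^3 * (2*n-1)) :=
    div_le_div₀ (by nlinarith [mul_nonneg (by linarith : (0:ℝ) ≤ 2*n+79) (mul_nonneg (by linarith : (0:ℝ) ≤ 2*n+1) (by linarith : (0:ℝ) ≤ E))]) hNum hDen0 hDenLo
  refine hstep.trans ?_
  have heq : 3*E/(4*n^2) + 1000/n^3 = (3*E*n + 4000)/(4*n^3) := by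
    field_simp; ring
  rw [heq, div_le_div_iff₀ (by positivity) (by positivity)]
  nlinarith [hn, hE2, hE1, mul_le_mul_of_nonneg_left hE2 (by positivity : (0:ℝ) ≤ n^4),
    mul_le_mul_of_nonneg_left hE2 (by positivity : (0:ℝ) ≤ n^3)]


/-- For all sufficiently large `N`, in the regime `0 ≤ α ≤ 1/2`, `1/2 ≤ β ≤ 20`,
`1/2 ≤ γ ≤ 3/2`, one has `−∂L_N/∂α ≥ 1/(8N²) − C/N³` and
`−∂L_N/∂β ≤ 3·√e/(4N²) + C/N³`. -/
theorem stmt17 :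
    ∃ C : ℝ, 0 < C ∧ ∃ N₀ : ℕ, ∀ N : ℕ, N₀ ≤ N → ∀ α β γ : ℝ,
      0 ≤ α → α ≤ 1 / 2 → 1 / 2 ≤ β → β ≤ 20 → 1 / 2 ≤ γ → γ ≤ 3 / 2 →
        1 / (8 * (N : ℝ) ^ 2) - C / (N : ℝ) ^ 3 ≤ -dLalpha N α β γ ∧
          -dLbeta N α β γ ≤
            3 * Real.sqrt (Real.exp 1) / (4 * (N : ℝ) ^ 2) + C / (N : ℝ) ^ 3 := by
  refine ⟨1000, by norm_num, 1000, ?_⟩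
  intro N hN α β γ hα0 hα2 hβ1 hβ2 hγ1 hγ2
  have hn : (1000:ℝ) ≤ (N:ℝ) := by exact_mod_cast hN
  have hE1 : (1:ℝ) ≤ Real.exp (1/2 : ℝ) := by
    have := Real.add_one_le_exp (1/2 : ℝ); linarith
  have hEe : (Real.exp (1/2 : ℝ))^2 = Real.exp 1 := by
    rw [sq, ← Real.exp_add]; norm_num
  have hE2 : Real.exp (1/2 : ℝ) ≤ 2 := by
    nlinarith [Real.exp_one_lt_d9, Real.exp_pos (1/2 : ℝ)]
  have hsqrtE : Real.sqrt (Real.exp 1) = Real.exp (1/2 : ℝ) := by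
    rw [← hEe, Real.sqrt_sq (by positivity)]
  have ha1 : (1:ℝ) ≤ Real.exp α := Real.one_le_exp hα0
  have haE : Real.exp α ≤ Real.exp (1/2 : ℝ) := Real.exp_le_exp.mpr hα2
  have hG0 : (0:ℝ) < Real.exp α + 2*(N:ℝ) - 2 := by linarith
  have hGlo : 2*(N:ℝ) - 1 ≤ Real.exp α + 2*(N:ℝ) - 2 := by linarith
  have hGup : Real.exp α + 2*(N:ℝ) - 2 ≤ 2*(N:ℝ) := by linarith
  obtain ⟨t, htdef⟩ : ∃ t, β * Real.exp α / (Real.exp α + 2*(N:ℝ) - 2) = t := ⟨_, rfl⟩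
  have hseq : sFun N α β = Real.exp t := by rw [← htdef]; rfl
  have ht0 : 0 < t := by
    rw [← htdef]; exact div_pos (by nlinarith) hG0
  have ht40 : t * (2*(N:ℝ) - 1) ≤ 40 := by
    have htG : t * (Real.exp α + 2*(N:ℝ) - 2) = β * Real.exp α := by
      rw [← htdef]; field_simp
    nlinarith [htG, ht0]
  have hts : t ≤ 1/40 := by nlinarith [ht40]
  have hs_lb' : 1 + t ≤ Real.exp t := by have := Real.add_one_le_exp t; linarith
  have hs_ub' : Real.exp t ≤ 1 + 2*t := by
    have hinv : Real.exp t * Real.exp (-t) = 1 := by rw [← Real.exp_add]; simp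
    have hlb : 1 - t ≤ Real.exp (-t) := by have := Real.add_one_le_exp (-t); linarith
    nlinarith [Real.exp_pos t, mul_le_mul_of_nonneg_left hlb (Real.exp_pos t).le]
  have hs_lb : 1 + t ≤ sFun N α β := hseq ▸ hs_lb'
  have hs_ub : sFun N α β ≤ 1 + 2*t := hseq ▸ hs_ub'
  have hs1 : 1 ≤ sFun N α β := by linarith
  have hrne : sFun N α β + (2*(N:ℝ) - 1) ≠ 0 := by nlinarith
  have hX : 2*(N:ℝ) - 1 ≤ (sFun N α β + (2*(N:ℝ)-1)) - γ*(sFun N α β - 1) := by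
    nlinarith [mul_le_mul_of_nonneg_right hγ2 (by linarith : (0:ℝ) ≤ sFun N α β - 1)]
  have hsm1 : 0 ≤ γ*(sFun N α β - 1) :=
    mul_nonneg (by linarith) (by linarith)
  have hXup : (sFun N α β + (2*(N:ℝ)-1)) - γ*(sFun N α β - 1) ≤ 2*(N:ℝ) + 1 := by
    nlinarith
  have hrup : sFun N α β + (2*(N:ℝ) - 1) ≤ 2*(N:ℝ) + 1 := by nlinarith
  have hMs : (2*(N:ℝ)-1) * sFun N α β ≤ 2*(N:ℝ) + 79 := by nlinarith [ht40]
  constructor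
  · have hda := dLalpha_eq N α β γ hG0.ne' hrne
    have hda' : -dLalpha N α β γ =
        (2*γ*(2*(N:ℝ)-1)*((sFun N α β + (2*(N:ℝ)-1)) - γ*(sFun N α β - 1))*(sFun N α β)*β*(Real.exp α)*(2*(N:ℝ)-2))
          / ((sFun N α β + (2*(N:ℝ)-1))^3 * (Real.exp α + 2*(N:ℝ)-2)^2) := by
      rw [hda]; field_simp; ring
    rw [hda']
    exact bound_alpha (N:ℝ) γ _ (sFun N α β) β (Real.exp α) hn hγ1 hX hs1 hβ1 ha1 hrup hGup
  · have hdb := dLbeta_eq N α β γ hrne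
    have hdb' : -dLbeta N α β γ =
        (2*γ*(2*(N:ℝ)-1)*((sFun N α β + (2*(N:ℝ)-1)) - γ*(sFun N α β - 1))*(sFun N α β)*(Real.exp α))
          / ((sFun N α β + (2*(N:ℝ)-1))^3 * (Real.exp α + 2*(N:ℝ)-2)) := by
      rw [hdb]; field_simp; ring
    rw [hdb', hsqrtE]
    exact bound_beta (N:ℝ) γ _ (sFun N α β) (Real.exp α) (Real.exp (1/2 : ℝ)) hn hγ2
      (by linarith) (by linarith) hXup hs1 hMs ha1 haE hE1 hE2 hrup hGlo
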